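/- With A, B and G as defined, for every integer k ∈ {0,1,...,n} with k ∉ A, G(k) ≤ G(i_1) − 1. -/

import Mathlib

def γfn (a ξ : ℝ) : ℝ := -max 0 (ξ - a) - max 0 (a - ξ)

noncomputable def G {t : ℕ} (a : Fin (t + 1) → ℕ) (ξ : ℝ) : ℝ :=
  (∑ j, γfn (a j : ℝ) ξ) - ∑ j : Fin t, γfn (((a j.castSucc : ℝ) + (a j.succ : ℝ)) / 2) ξ

lemma γfn_eq (a ξ : ℝ) : γfn a ξ = -|ξ - a| := by
  unfold γfn
  rcases le_total a ξ with h | h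
  · rw [abs_of_nonneg (show (0:ℝ) ≤ ξ - a by linarith),
      max_eq_right (show (0:ℝ) ≤ ξ - a by linarith),
      max_eq_left (show a - ξ ≤ (0:ℝ) by linarith)]
    ring
  · rw [abs_of_nonpos (show ξ - a ≤ (0:ℝ) by linarith),
      max_eq_left (show ξ - a ≤ (0:ℝ) by linarith),
      max_eq_right (show (0:ℝ) ≤ a - ξ by linarith)]
    ring

noncomputable def Ffn (p q ξ : ℝ) : ℝ := |ξ - (p + q) / 2| - (|ξ - p| + |ξ - q|) / 2

lemma Ffn_nonpos (p q ξ : ℝ) : Ffn p q ξ ≤ 0 := by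
  have h : |ξ - (p + q) / 2| = |(ξ - p) + (ξ - q)| / 2 := by
    rw [show (ξ - p) + (ξ - q) = 2 * (ξ - (p+q)/2) by ring, abs_mul]
    rw [abs_of_nonneg (show (0:ℝ) ≤ 2 by norm_num)]; ring
  have := abs_add_le (ξ - p) (ξ - q)
  unfold Ffn; linarith

lemma Ffn_eq_zero_left (p q ξ : ℝ) (h1 : ξ ≤ p) (h2 : p ≤ q) : Ffn p q ξ = 0 := by
  unfold Ffn
  rw [abs_of_nonpos (show ξ - (p+q)/2 ≤ 0 by linarith),
    abs_of_nonpos (show ξ - p ≤ 0 by linarith),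
    abs_of_nonpos (show ξ - q ≤ 0 by linarith)]
  ring

lemma Ffn_eq_zero_right (p q ξ : ℝ) (h1 : q ≤ ξ) (h2 : p ≤ q) : Ffn p q ξ = 0 := by
  unfold Ffn
  rw [abs_of_nonneg (show (0:ℝ) ≤ ξ - (p+q)/2 by linarith),
    abs_of_nonneg (show (0:ℝ) ≤ ξ - p by linarith),
    abs_of_nonneg (show (0:ℝ) ≤ ξ - q by linarith)]
  ring

lemma Ffn_le_neg_one (p q ξ : ℝ) (h1 : p + 1 ≤ ξ) (h2 : ξ + 1 ≤ q) : Ffn p q ξ ≤ -1 := by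
  unfold Ffn
  rw [abs_of_nonneg (show (0:ℝ) ≤ ξ - p by linarith),
    abs_of_nonpos (show ξ - q ≤ 0 by linarith)]
  rcases abs_cases (ξ - (p + q) / 2) with ⟨h, _⟩ | ⟨h, _⟩ <;> rw [h] <;> linarith

lemma Gdecomp {t : ℕ} (a : Fin (t + 1) → ℕ) (ξ : ℝ) :
    G a ξ = (∑ j : Fin t, Ffn (a j.castSucc : ℝ) (a j.succ : ℝ) ξ)
      - (|ξ - (a 0 : ℝ)| + |ξ - (a (Fin.last t) : ℝ)|) / 2 := by
  have key : ∑ j : Fin t, ((|ξ - (a j.castSucc : ℝ)| + |ξ - (a j.succ : ℝ)|) / 2)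
      = (∑ j : Fin (t+1), |ξ - (a j : ℝ)|)
        - (|ξ - (a 0 : ℝ)| + |ξ - (a (Fin.last t) : ℝ)|) / 2 := by
    have h1 := Fin.sum_univ_castSucc (fun j : Fin (t+1) => |ξ - (a j : ℝ)|)
    have h2 := Fin.sum_univ_succ (fun j : Fin (t+1) => |ξ - (a j : ℝ)|)
    have h3 : ∑ j : Fin t, ((|ξ - (a j.castSucc : ℝ)| + |ξ - (a j.succ : ℝ)|) / 2)
        = ((∑ j : Fin t, |ξ - (a j.castSucc : ℝ)|) + ∑ j : Fin t, |ξ - (a j.succ : ℝ)|) / 2 := by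
      rw [← Finset.sum_add_distrib, ← Finset.sum_div]
    simp only [h1, h2] at *
    rw [h3]; ring_nf; linarith
  simp only [G, γfn_eq, Ffn]
  rw [Finset.sum_sub_distrib, key, Finset.sum_neg_distrib, Finset.sum_neg_distrib]
  ring

theorem stmt9 (n t : ℕ) (ht : 1 ≤ t) (a : Fin (t + 1) → ℕ) (ha : StrictMono a)
    (haI : ∀ j, a j ∈ Finset.Icc 1 n) :
    ∀ k : ℕ, k ≤ n → (∀ j, a j ≠ k) → G a (k : ℝ) ≤ G a (a 0 : ℝ) - 1 := by
  intro k hk hne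
  have hmono : ∀ j : Fin (t+1), a 0 ≤ a j := fun j => ha.monotone (Fin.zero_le j)
  have hlast : ∀ j : Fin (t+1), a j ≤ a (Fin.last t) := fun j => ha.monotone (Fin.le_last j)
  have hcs : ∀ j : Fin t, a j.castSucc < a j.succ := fun j => ha (Fin.castSucc_lt_succ : j.castSucc < j.succ)
  have h0L : (a 0 : ℝ) ≤ (a (Fin.last t) : ℝ) := by exact_mod_cast hmono (Fin.last t)
  have hG0 : G a (a 0 : ℝ) = -(((a (Fin.last t) : ℝ) - (a 0 : ℝ)) / 2) := by
    rw [Gdecomp]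
    have hz : ∀ j ∈ Finset.univ, Ffn (a (Fin.castSucc j) : ℝ) (a (Fin.succ j) : ℝ) (a 0 : ℝ) = 0 := by
      intro j _
      refine Ffn_eq_zero_left _ _ _ ?_ ?_
      · exact_mod_cast hmono j.castSucc
      · exact_mod_cast (hcs j).le
    rw [Finset.sum_congr rfl hz, Finset.sum_const_zero, sub_self, abs_zero,
      abs_of_nonpos (by linarith : (a 0 : ℝ) - (a (Fin.last t) : ℝ) ≤ 0)]
    ring
  rw [Gdecomp, hG0]
  rcases lt_trichotomy k (a 0) with hc | hc | hc
  · -- k < a 0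
    have hz : ∀ j ∈ Finset.univ, Ffn (a (Fin.castSucc j) : ℝ) (a (Fin.succ j) : ℝ) (k : ℝ) = 0 := by
      intro j _
      refine Ffn_eq_zero_left _ _ _ ?_ ?_
      · exact_mod_cast hc.le.trans (hmono j.castSucc)
      · exact_mod_cast (hcs j).le
    rw [Finset.sum_congr rfl hz, Finset.sum_const_zero]
    have h1 : (k : ℝ) + 1 ≤ (a 0 : ℝ) := by exact_mod_cast hc
    rw [abs_of_nonpos (by linarith : (k : ℝ) - (a 0 : ℝ) ≤ 0),
      abs_of_nonpos (by linarith : (k : ℝ) - (a (Fin.last t) : ℝ) ≤ 0)]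
    linarith
  · exact absurd hc.symm (hne 0)
  · rcases lt_trichotomy (a (Fin.last t)) k with hd | hd | hd
    · -- a last < k
      have hz : ∀ j ∈ Finset.univ, Ffn (a (Fin.castSucc j) : ℝ) (a (Fin.succ j) : ℝ) (k : ℝ) = 0 := by
        intro j _
        refine Ffn_eq_zero_right _ _ _ ?_ ?_
        · exact_mod_cast ((hlast j.succ).trans hd.le)
        · exact_mod_cast (hcs j).le
      rw [Finset.sum_congr rfl hz, Finset.sum_const_zero]
      have h1 : (a (Fin.last t) : ℝ) + 1 ≤ (k : ℝ) := by exact_mod_cast hd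
      rw [abs_of_nonneg (by linarith : (0:ℝ) ≤ (k : ℝ) - (a 0 : ℝ)),
        abs_of_nonneg (by linarith : (0:ℝ) ≤ (k : ℝ) - (a (Fin.last t) : ℝ))]
      linarith
    · exact absurd hd (hne (Fin.last t))
    · -- a 0 < k < a last : find the gap
      set S : Finset (Fin (t+1)) := Finset.univ.filter (fun j => a j < k) with hS
      have h0S : (0 : Fin (t+1)) ∈ S := by simp [hS, hc]
      have hSne : S.Nonempty := ⟨0, h0S⟩
      set j : Fin (t+1) := S.max' hSne with hj
      have hjS : j ∈ S := S.max'_mem hSne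
      have hajk : a j < k := by simpa [hS] using hjS
      have hjne : j ≠ Fin.last t := by
        intro h
        rw [h] at hajk
        omega
      set j' : Fin t := j.castPred hjne with hj'
      have hj'cs : j'.castSucc = j := Fin.castSucc_castPred j hjne
      have hksucc : k < a j'.succ := by
        rcases lt_trichotomy (a j'.succ) k with h | h | h
        · exfalso
          have : j'.succ ∈ S := by simp [hS, h]
          have hle := S.le_max' _ this
          rw [← hj] at hle
          have := (Fin.castSucc_lt_succ : j'.castSucc < j'.succ)
          rw [hj'cs] at this
          exact absurd hle (not_le.mpr this)
        · exact absurd h (hne j'.succ)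
        · exact h
      have hsum : ∑ j : Fin t, Ffn (a (Fin.castSucc j) : ℝ) (a (Fin.succ j) : ℝ) (k : ℝ) ≤ -1 := by
        have hmem : j' ∈ Finset.univ := Finset.mem_univ j'
        rw [← Finset.sum_erase_add _ _ hmem]
        have h1 : Ffn (a (Fin.castSucc j') : ℝ) (a (Fin.succ j') : ℝ) (k : ℝ) ≤ -1 := by
          refine Ffn_le_neg_one _ _ _ ?_ ?_
          · rw [hj'cs]; exact_mod_cast hajk
          · exact_mod_cast hksucc
        have h2 : ∑ i ∈ Finset.univ.erase j', Ffn (a (Fin.castSucc i) : ℝ) (a (Fin.succ i) : ℝ) (k : ℝ) ≤ 0 :=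
          Finset.sum_nonpos fun i _ => Ffn_nonpos _ _ _
        linarith
      have hk0 : (a 0 : ℝ) ≤ (k : ℝ) := by exact_mod_cast hc.le
      have hkL : (k : ℝ) ≤ (a (Fin.last t) : ℝ) := by exact_mod_cast hd.le
      rw [abs_of_nonneg (by linarith : (0:ℝ) ≤ (k : ℝ) - (a 0 : ℝ)),
        abs_of_nonpos (by linarith : (k : ℝ) - (a (Fin.last t) : ℝ) ≤ 0)]
      linarith
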